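/- Let V be a nonzero finite-dimensional complex vector space and let W, W' be complex vector spaces. Regard Hom_ℂ(V, W) and Hom_ℂ(V, W') as right End_ℂ(V)-modules via precomposition (β · a := β ∘ a). Then every homomorphism of right End_ℂ(V)-modules φ : Hom_ℂ(V, W) → Hom_ℂ(V, W') is of the form φ(β) = f ∘ β for a unique ℂ-linear map f : W → W'. Equivalently, postcomposition gives a ℂ-linear bijection from Hom_ℂ(W, W') onto the space of right End_ℂ(V)-module homomorphisms from Hom_ℂ(V, W) to Hom_ℂ(V, W'). -/

import Mathlib

/-- Let `V` be a nonzero finite-dimensional complex vector space and `W`, `W'` complex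
vector spaces.  Every homomorphism of right `End_ℂ(V)`-modules
`φ : Hom_ℂ(V, W) → Hom_ℂ(V, W')` (ℂ-linear and compatible with precomposition,
i.e. `φ (β ∘ a) = φ β ∘ a` for all `a : End_ℂ(V)`) is postcomposition with a unique
ℂ-linear map `f : W → W'`. -/
theorem rightEndModuleHom_eq_postcomp
    (V : Type*) [AddCommGroup V] [Module ℂ V] [FiniteDimensional ℂ V] [Nontrivial V]
    (W W' : Type*) [AddCommGroup W] [Module ℂ W] [AddCommGroup W'] [Module ℂ W']
    (φ : (V →ₗ[ℂ] W) →ₗ[ℂ] (V →ₗ[ℂ] W'))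
    (hφ : ∀ (a : Module.End ℂ V) (β : V →ₗ[ℂ] W), φ (β ∘ₗ a) = (φ β) ∘ₗ a) :
    ∃! f : W →ₗ[ℂ] W', ∀ β : V →ₗ[ℂ] W, φ β = f ∘ₗ β := by
  obtain ⟨v₀, hv₀⟩ := exists_ne (0 : V)
  obtain ⟨g₀, hg₀⟩ : ∃ g : Module.Dual ℂ V, g v₀ ≠ 0 := by
    by_contra h
    push_neg at h
    exact hv₀ ((Module.forall_dual_apply_eq_zero_iff ℂ v₀).mp h)
  set g : V →ₗ[ℂ] ℂ := (g₀ v₀)⁻¹ • g₀ with hg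
  have hg1 : g v₀ = 1 := by
    simp [hg, inv_mul_cancel₀ hg₀]
  -- the candidate map
  set f : W →ₗ[ℂ] W' :=
    ((LinearMap.applyₗ v₀).comp φ).comp (LinearMap.smulRightₗ g) with hf
  have hfw : ∀ w : W, f w = φ (g.smulRight w) v₀ := fun w => rfl
  have key : ∀ (β : V →ₗ[ℂ] W) (v : V), φ β v = f (β v) := by
    intro β v
    have h1 : β ∘ₗ g.smulRight v = g.smulRight (β v) := by
      ext x; simp
    have h2 := hφ (g.smulRight v) β
    rw [h1] at h2
    have := congrArg (fun m => m v₀) h2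
    rw [hfw]
    simpa [hg1] using this.symm
  refine ⟨f, ?_, ?_⟩
  · intro β; ext v; exact key β v
  · intro f' hf'
    ext w
    have := congrArg (fun m => m v₀) (hf' (g.smulRight w))
    simpa [hg1, hfw] using this.symm
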